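/- Let $a_1,\dots,a_n$ be positive integers, $x_1,\dots,x_n$ integers, and for each sign vector $y \in \{\pm 1\}^n$ define the conjugate $E_y = \sum_{i=1}^n y_i x_i \sqrt{a_i}$. Then the product $\prod_{y \in \{\pm 1\}^n} E_y$ is an integer. -/

import Mathlib

open Finset

namespace SqrtProdAux

variable {n : ℕ}

/-- sign factor of subset `S` at sign vector `s`. -/
def sgn (s S : Fin n → Bool) : ℝ := ∏ i, if S i then (if s i then (1:ℝ) else -1) else 1

/-- product of square roots over subset `S`. -/
noncomputable def rt (a : Fin n → ℕ) (S : Fin n → Bool) : ℝ :=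
  ∏ i, if S i then Real.sqrt (a i) else 1

lemma sgn_mul (s S T : Fin n → Bool) :
    sgn s S * sgn s T = sgn s (fun i => xor (S i) (T i)) := by
  unfold sgn
  rw [← Finset.prod_mul_distrib]
  refine Finset.prod_congr rfl fun i _ => ?_
  cases hS : S i <;> cases hT : T i <;> cases hs : s i <;> simp [hS, hT, hs]

lemma rt_mul (a : Fin n → ℕ) (S T : Fin n → Bool) :
    rt a S * rt a T =
      (∏ i, if S i ∧ T i then (a i : ℝ) else 1) * rt a (fun i => xor (S i) (T i)) := by
  unfold rt
  rw [← Finset.prod_mul_distrib, ← Finset.prod_mul_distrib]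
  refine Finset.prod_congr rfl fun i _ => ?_
  cases hS : S i <;> cases hT : T i <;>
    simp [hS, hT, Real.mul_self_sqrt (Nat.cast_nonneg (a i))]

lemma exists_int_prod (a : Fin n → ℕ) (S T : Fin n → Bool) :
    ∃ m : ℤ, (∏ i, if S i ∧ T i then (a i : ℝ) else 1) = (m : ℝ) := by
  refine ⟨∏ i, if S i ∧ T i then (a i : ℤ) else 1, ?_⟩
  push_cast [apply_ite (fun z : ℤ => (z : ℝ))]
  rfl

/-- `f` has an integer expansion in signs and roots. -/
def Rep (a : Fin n → ℕ) (f : (Fin n → Bool) → ℝ) : Prop :=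
  ∃ c : (Fin n → Bool) → ℤ, ∀ s, f s = ∑ S, (c S : ℝ) * sgn s S * rt a S

lemma Rep.sub {a : Fin n → ℕ} {f g} (hf : Rep a f) (hg : Rep a g) :
    Rep a (fun s => f s - g s) := by
  obtain ⟨c, hc⟩ := hf; obtain ⟨d, hd⟩ := hg
  exact ⟨fun S => c S - d S, fun s => by
    simp only [hc, hd, ← Finset.sum_sub_distrib]
    exact Finset.sum_congr rfl fun S _ => by push_cast; ring⟩

lemma Rep.add {a : Fin n → ℕ} {f g} (hf : Rep a f) (hg : Rep a g) :
    Rep a (fun s => f s + g s) := by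
  obtain ⟨c, hc⟩ := hf; obtain ⟨d, hd⟩ := hg
  exact ⟨fun S => c S + d S, fun s => by
    simp only [hc, hd, ← Finset.sum_add_distrib]
    exact Finset.sum_congr rfl fun S _ => by push_cast; ring⟩

lemma Rep.intMul {a : Fin n → ℕ} {f} (m : ℤ) (hf : Rep a f) :
    Rep a (fun s => (m : ℝ) * f s) := by
  obtain ⟨c, hc⟩ := hf
  exact ⟨fun S => m * c S, fun s => by
    simp only [hc, Finset.mul_sum]
    exact Finset.sum_congr rfl fun S _ => by push_cast; ring⟩

lemma Rep.mul {a : Fin n → ℕ} {f g} (hf : Rep a f) (hg : Rep a g) :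
    Rep a (fun s => f s * g s) := by
  obtain ⟨c, hc⟩ := hf; obtain ⟨d, hd⟩ := hg
  choose m hm using fun S T => exists_int_prod a S T
  refine ⟨fun U => ∑ S, c S * d (fun i => xor (S i) (U i)) * m S (fun i => xor (S i) (U i)),
    fun s => ?_⟩
  show f s * g s = _
  have step1 : f s * g s
      = ∑ S, ∑ T, ((c S : ℝ) * d T * m S T) * sgn s (fun i => xor (S i) (T i))
          * rt a (fun i => xor (S i) (T i)) := by
    rw [hc, hd, Finset.sum_mul_sum]
    refine Finset.sum_congr rfl fun S _ => Finset.sum_congr rfl fun T _ => ?_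
    have h1 := sgn_mul s S T
    have h2 := rt_mul a S T
    rw [hm S T] at h2
    have h3 : ((c S : ℝ) * sgn s S * rt a S) * ((d T : ℝ) * sgn s T * rt a T)
        = ((c S : ℝ) * d T) * ((sgn s S * sgn s T) * (rt a S * rt a T)) := by ring
    rw [h3, h1, h2]; ring
  have step2 : ∀ S : Fin n → Bool,
      (∑ T, ((c S : ℝ) * d T * m S T) * sgn s (fun i => xor (S i) (T i))
          * rt a (fun i => xor (S i) (T i)))
      = ∑ U, ((c S : ℝ) * d (fun i => xor (S i) (U i)) * m S (fun i => xor (S i) (U i)))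
          * sgn s U * rt a U := by
    intro S
    have hinv : Function.Involutive (fun U : Fin n → Bool => fun i => xor (S i) (U i)) := by
      intro U; funext i; simp only []; cases S i <;> cases U i <;> rfl
    refine Fintype.sum_equiv hinv.toPerm _ _ fun T => ?_
    simp only [Function.Involutive.coe_toPerm]
    have hT2 : (fun i => xor (S i) (xor (S i) (T i))) = T := by
      funext i; cases S i <;> cases T i <;> rfl
    rw [hT2]
  rw [step1]
  rw [Finset.sum_congr rfl fun S _ => step2 S, Finset.sum_comm]
  refine Finset.sum_congr rfl fun U _ => ?_
  push_cast
  rw [Finset.sum_mul, Finset.sum_mul]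

lemma sgn_cons (b : Bool) (s' : Fin n → Bool) (e : Bool) (S' : Fin n → Bool) :
    sgn (Fin.cons b s') (Fin.cons e S')
      = (if e then (if b then (1:ℝ) else -1) else 1) * sgn s' S' := by
  unfold sgn
  rw [Fin.prod_univ_succ]
  simp [Fin.cons_zero, Fin.cons_succ]

lemma rt_cons (a : Fin (n+1) → ℕ) (e : Bool) (S' : Fin n → Bool) :
    rt a (Fin.cons e S')
      = (if e then Real.sqrt (a 0) else 1) * rt (fun i => a i.succ) S' := by
  unfold rt
  rw [Fin.prod_univ_succ]
  simp [Fin.cons_zero, Fin.cons_succ]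

lemma consEquiv_eq {n : ℕ} (e : Bool) (y : Fin n → Bool) :
    (Fin.consEquiv fun _ => Bool) (e, y) = Fin.cons e y := rfl

lemma key : ∀ (n : ℕ) (a : Fin n → ℕ) (c : (Fin n → Bool) → ℤ),
    ∃ k : ℤ, (∏ s : Fin n → Bool, ∑ S : Fin n → Bool, (c S : ℝ) * sgn s S * rt a S) = (k : ℝ) := by
  intro n
  induction n with
  | zero =>
    intro a c
    refine ⟨c default, ?_⟩
    simp [sgn, rt, Finset.univ_unique]
    exact congrArg c (Subsingleton.elim _ _)
  | succ n ih =>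
    intro a c
    set a' : Fin n → ℕ := fun i => a i.succ with ha'
    set G : (Fin n → Bool) → ℝ :=
      fun s' => ∑ S', ((c (Fin.cons false S') : ℝ)) * sgn s' S' * rt a' S' with hGdef
    set H : (Fin n → Bool) → ℝ :=
      fun s' => ∑ S', ((c (Fin.cons true S') : ℝ)) * sgn s' S' * rt a' S' with hHdef
    have hsplit : ∀ (b : Bool) (s' : Fin n → Bool),
        (∑ S : Fin (n+1) → Bool, (c S : ℝ) * sgn (Fin.cons b s') S * rt a S)
          = G s' + (if b then (1:ℝ) else -1) * Real.sqrt (a 0) * H s' := by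
      intro b s'
      rw [← Equiv.sum_comp (Fin.consEquiv (fun _ => Bool))
        (fun S => (c S : ℝ) * sgn (Fin.cons b s') S * rt a S), Fintype.sum_prod_type,
        Fintype.sum_bool]
      simp only [consEquiv_eq, sgn_cons, rt_cons, if_true, if_false]
      rw [hGdef, hHdef]
      simp only [Finset.mul_sum]
      rw [add_comm]
      congr 1
      · refine Finset.sum_congr rfl fun S' _ => ?_
        norm_num
        exact Or.inl rfl
      · refine Finset.sum_congr rfl fun S' _ => ?_
        norm_num
        rw [ha']
        split_ifs <;> ring
    have hsq : Real.sqrt (a 0) * Real.sqrt (a 0) = (a 0 : ℝ) :=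
      Real.mul_self_sqrt (Nat.cast_nonneg _)
    have hprod : (∏ s : Fin (n+1) → Bool, ∑ S, (c S : ℝ) * sgn s S * rt a S)
        = ∏ s' : Fin n → Bool, (G s' * G s' - (a 0 : ℝ) * (H s' * H s')) := by
      rw [← Equiv.prod_comp (Fin.consEquiv (fun _ => Bool))
        (fun s => ∑ S, (c S : ℝ) * sgn s S * rt a S), Fintype.prod_prod_type,
        Fintype.prod_bool, ← Finset.prod_mul_distrib]
      refine Finset.prod_congr rfl fun s' _ => ?_
      simp only [consEquiv_eq]
      rw [hsplit true s', hsplit false s']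
      norm_num
      linear_combination (-(H s' * H s')) * hsq
    have hRep : Rep a' (fun s' => G s' * G s' - (a 0 : ℝ) * (H s' * H s')) := by
      have hG : Rep a' G := ⟨fun S' => c (Fin.cons false S'), fun _ => rfl⟩
      have hH : Rep a' H := ⟨fun S' => c (Fin.cons true S'), fun _ => rfl⟩
      exact (hG.mul hG).sub (Rep.intMul (a 0) (hH.mul hH))
    obtain ⟨d, hd⟩ := hRep
    obtain ⟨k, hk⟩ := ih a' d
    refine ⟨k, ?_⟩
    rw [hprod, ← hk]
    exact Finset.prod_congr rfl fun s' _ => hd s'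

lemma rep_single (a : Fin n → ℕ) (i : Fin n) (x : ℤ) :
    Rep a (fun s => (if s i then (1:ℝ) else -1) * (x : ℝ) * Real.sqrt (a i)) := by
  refine ⟨fun S => if S = (fun j => decide (j = i)) then x else 0, fun s => ?_⟩
  rw [Finset.sum_eq_single (fun j => decide (j = i))]
  · beta_reduce
    rw [if_pos rfl]
    have h1 : sgn s (fun j => decide (j = i)) = (if s i then (1:ℝ) else -1) := by
      unfold sgn
      rw [Finset.prod_eq_single i]
      · simp
      · intro j _ hj; simp [hj]
      · simp
    have h2 : rt a (fun j => decide (j = i)) = Real.sqrt (a i) := by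
      unfold rt
      rw [Finset.prod_eq_single i]
      · simp
      · intro j _ hj; simp [hj]
      · simp
    rw [h1, h2]; ring
  · intro b _ hb; beta_reduce; rw [if_neg hb]; push_cast; ring
  · simp

lemma rep_sum (a : Fin n → ℕ) {ι : Type*} (t : Finset ι) (f : ι → (Fin n → Bool) → ℝ)
    (h : ∀ i ∈ t, Rep a (f i)) : Rep a (fun s => ∑ i ∈ t, f i s) := by
  classical
  induction t using Finset.induction with
  | empty => exact ⟨0, by simp⟩
  | insert _ _ hni ih =>
    rename_i j t'
    have h1 : Rep a (f j) := h j (Finset.mem_insert_self _ _)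
    have h2 : Rep a (fun s => ∑ i ∈ t', f i s) :=
      ih fun i hi => h i (Finset.mem_insert_of_mem hi)
    have := h1.add h2
    refine this.imp fun c hc => fun s => ?_
    beta_reduce
    rw [Finset.sum_insert hni]
    exact hc s

end SqrtProdAux

open SqrtProdAux in
/-- The product of all sign-conjugates of a sum of square roots is an integer. -/
theorem prod_conjugates_is_integer
    (n : ℕ) (a : Fin n → ℕ) (ha : ∀ i, 0 < a i) (x : Fin n → ℤ) :
    ∃ k : ℤ, (∏ s : Fin n → Bool,
        ∑ i, ((if s i then (1 : ℝ) else -1) * (x i : ℝ) * Real.sqrt (a i))) = (k : ℝ) := by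
  have hRep : Rep a (fun s => ∑ i, (if s i then (1 : ℝ) else -1) * (x i : ℝ) * Real.sqrt (a i)) :=
    rep_sum a Finset.univ _ fun i _ => rep_single a i (x i)
  obtain ⟨c, hc⟩ := hRep
  obtain ⟨k, hk⟩ := key n a c
  exact ⟨k, by rw [Finset.prod_congr rfl fun s _ => hc s, hk]⟩
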